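/- Let H be a separable complex Hilbert space, S a monoid, and for each s ∈ S let T_s be a linear isometry of H into itself such that T_s ∘ T_t = T_{st} for all s, t ∈ S and T_e = id for the identity e of S. Let (F_n) be a sequence of nonempty finite subsets of S such that for every s ∈ S, |sF_n Δ F_n| / |F_n| → 0 as n → ∞, where sF_n = {s·h : h ∈ F_n} and Δ denotes symmetric difference. Then the averages (1/|F_n|) Σ_{h ∈ F_n} T_h converge in the weak operator topology to the orthogonal projection of H onto the closed subspace {ξ ∈ H : T_s ξ = ξ for all s ∈ S}. -/

import Mathlib

open Filter
open scoped InnerProductSpace symmDiff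

/-- The closed subspace of vectors fixed by every isometry `T s`. -/
def fixedSubmodule {H : Type*} [NormedAddCommGroup H] [InnerProductSpace ℂ H]
    {S : Type*} (T : S → H →ₗᵢ[ℂ] H) : Submodule ℂ H where
  carrier := {ξ | ∀ s, T s ξ = ξ}
  add_mem' := by
    intro a b ha hb s
    simp [map_add, ha s, hb s]
  zero_mem' := by
    intro s
    simp
  smul_mem' := by
    intro c a ha s
    simp [map_smul, ha s]

lemma isClosed_fixedSubmodule {H : Type*} [NormedAddCommGroup H] [InnerProductSpace ℂ H]
    {S : Type*} (T : S → H →ₗᵢ[ℂ] H) : IsClosed ((fixedSubmodule T : Set H)) := by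
  have : (fixedSubmodule T : Set H) = ⋂ s, {ξ | (T s) ξ = ξ} := by
    ext ξ
    simp [fixedSubmodule, Set.mem_iInter]
  rw [this]
  exact isClosed_iInter fun s => isClosed_eq (T s).continuous continuous_id

/-- The orthogonal projection onto the subspace of vectors fixed by every `T s`. -/
noncomputable def fixedProjection {H : Type*} [NormedAddCommGroup H] [InnerProductSpace ℂ H]
    [CompleteSpace H] {S : Type*} (T : S → H →ₗᵢ[ℂ] H) : H →L[ℂ] (fixedSubmodule T) :=
  haveI : CompleteSpace (fixedSubmodule T) := (isClosed_fixedSubmodule T).completeSpace_coe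
  (fixedSubmodule T).orthogonalProjectionOnto

lemma sum_shift_bound {α : Type*} [DecidableEq α] (F : Finset α) (φ : α → α) (f : α → ℂ)
    {C : ℝ} (hC : 0 ≤ C) (hf : ∀ a, ‖f a‖ ≤ C) :
    ‖(∑ h ∈ F, f (φ h)) - ∑ h ∈ F, f h‖ ≤ 2 * C * ((F.image φ) ∆ F).card := by
  set I := F.image φ with hI
  have h1 : ∑ h ∈ F, f (φ h) = ∑ g ∈ I, ((F.filter (fun a => φ a = g)).card : ℂ) * f g := by
    rw [Finset.sum_comp]
    simp [nsmul_eq_mul]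
    rfl
  have hsub1 : F \ I ⊆ I ∆ F := fun x hx => by
    simp only [Finset.mem_symmDiff, Finset.mem_sdiff] at hx ⊢; tauto
  have hsub2 : I \ F ⊆ I ∆ F := fun x hx => by
    simp only [Finset.mem_symmDiff, Finset.mem_sdiff] at hx ⊢; tauto
  have hcards : (F.card : ℝ) ≤ ((F \ I).card : ℝ) + I.card := by
    exact_mod_cast Finset.card_le_card_sdiff_add_card
  have hFI : (F.card : ℝ) - I.card ≤ ((I ∆ F).card : ℝ) := by
    have := Finset.card_le_card hsub1
    have : ((F \ I).card : ℝ) ≤ (I ∆ F).card := by exact_mod_cast this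
    linarith
  -- step A
  have hA : ‖(∑ h ∈ F, f (φ h)) - ∑ g ∈ I, f g‖ ≤ C * ((F.card : ℝ) - I.card) := by
    rw [h1, ← Finset.sum_sub_distrib]
    calc ‖∑ g ∈ I, (((F.filter (fun a => φ a = g)).card : ℂ) * f g - f g)‖
        ≤ ∑ g ∈ I, ‖(((F.filter (fun a => φ a = g)).card : ℂ) * f g - f g)‖ :=
          norm_sum_le _ _
      _ ≤ ∑ g ∈ I, (((F.filter (fun a => φ a = g)).card : ℝ) - 1) * C := by
          apply Finset.sum_le_sum
          intro g hg
          have hge : 1 ≤ (F.filter (fun a => φ a = g)).card := by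
            obtain ⟨a, ha, rfl⟩ := Finset.mem_image.mp hg
            exact Finset.card_pos.mpr ⟨a, Finset.mem_filter.mpr ⟨ha, rfl⟩⟩
          have heq : (((F.filter (fun a => φ a = g)).card : ℂ) * f g - f g)
              = (((F.filter (fun a => φ a = g)).card : ℂ) - 1) * f g := by ring
          rw [heq, norm_mul]
          have h2 : ‖(((F.filter (fun a => φ a = g)).card : ℂ) - 1)‖
              = ((F.filter (fun a => φ a = g)).card : ℝ) - 1 := by
            rw [show (((F.filter (fun a => φ a = g)).card : ℂ) - 1)
                = (((F.filter (fun a => φ a = g)).card - 1 : ℕ) : ℂ) by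
              rw [Nat.cast_sub hge]; push_cast; ring]
            rw [Complex.norm_natCast, Nat.cast_sub hge, Nat.cast_one]
          rw [h2]
          apply mul_le_mul_of_nonneg_left (hf g)
          simp only [sub_nonneg]; exact_mod_cast hge
      _ = C * ((F.card : ℝ) - I.card) := by
          rw [← Finset.sum_mul, Finset.sum_sub_distrib, Finset.sum_const, nsmul_eq_mul, mul_one]
          rw [show ∑ g ∈ I, (((F.filter (fun a => φ a = g)).card : ℝ)) = (F.card : ℝ) by
            rw [Finset.card_eq_sum_card_image φ F]; push_cast; rfl]
          ring
  -- step B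
  have hB : ‖(∑ g ∈ I, f g) - ∑ h ∈ F, f h‖ ≤ C * ((I ∆ F).card : ℝ) := by
    have hsplit1 : ∑ g ∈ I, f g = (∑ g ∈ I ∩ F, f g) + ∑ g ∈ I \ F, f g := by
      rw [Finset.sum_inter_add_sum_sdiff]
    have hsplit2 : ∑ h ∈ F, f h = (∑ g ∈ I ∩ F, f g) + ∑ g ∈ F \ I, f g := by
      rw [Finset.inter_comm, Finset.sum_inter_add_sum_sdiff]
    rw [hsplit1, hsplit2]
    have : ((∑ g ∈ I ∩ F, f g) + ∑ g ∈ I \ F, f g) - ((∑ g ∈ I ∩ F, f g) + ∑ g ∈ F \ I, f g)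
        = (∑ g ∈ I \ F, f g) - ∑ g ∈ F \ I, f g := by ring
    rw [this]
    have b1 : ‖∑ g ∈ I \ F, f g‖ ≤ ((I \ F).card : ℝ) * C := by
      calc ‖∑ g ∈ I \ F, f g‖ ≤ ∑ g ∈ I \ F, ‖f g‖ := norm_sum_le _ _
        _ ≤ ∑ _g ∈ I \ F, C := Finset.sum_le_sum fun g _ => hf g
        _ = ((I \ F).card : ℝ) * C := by rw [Finset.sum_const, nsmul_eq_mul]
    have b2 : ‖∑ g ∈ F \ I, f g‖ ≤ ((F \ I).card : ℝ) * C := by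
      calc ‖∑ g ∈ F \ I, f g‖ ≤ ∑ g ∈ F \ I, ‖f g‖ := norm_sum_le _ _
        _ ≤ ∑ _g ∈ F \ I, C := Finset.sum_le_sum fun g _ => hf g
        _ = ((F \ I).card : ℝ) * C := by rw [Finset.sum_const, nsmul_eq_mul]
    have c1 : ((I \ F).card : ℝ) ≤ (I ∆ F).card := by
      exact_mod_cast Finset.card_le_card hsub2
    have c2 : ((F \ I).card : ℝ) ≤ (I ∆ F).card := by
      exact_mod_cast Finset.card_le_card hsub1
    calc ‖(∑ g ∈ I \ F, f g) - ∑ g ∈ F \ I, f g‖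
        ≤ ‖∑ g ∈ I \ F, f g‖ + ‖∑ g ∈ F \ I, f g‖ := norm_sub_le _ _
      _ ≤ ((I \ F).card : ℝ) * C + ((F \ I).card : ℝ) * C := add_le_add b1 b2
      _ = C * ((I ∆ F).card : ℝ) := by
          have hcardsd : ((I ∆ F).card : ℝ) = ((I \ F).card : ℝ) + ((F \ I).card : ℝ) := by
            rw [symmDiff_def, Finset.sup_eq_union]
            rw [Finset.card_union_of_disjoint disjoint_sdiff_sdiff]
            push_cast; ring
          rw [hcardsd]; ring
  have tri : ‖(∑ h ∈ F, f (φ h)) - ∑ h ∈ F, f h‖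
      ≤ ‖(∑ h ∈ F, f (φ h)) - ∑ g ∈ I, f g‖ + ‖(∑ g ∈ I, f g) - ∑ h ∈ F, f h‖ := by
    have := norm_sub_le ((∑ h ∈ F, f (φ h)) - ∑ g ∈ I, f g) ((∑ h ∈ F, f h) - ∑ g ∈ I, f g)
    calc ‖(∑ h ∈ F, f (φ h)) - ∑ h ∈ F, f h‖
        = ‖((∑ h ∈ F, f (φ h)) - ∑ g ∈ I, f g) + ((∑ g ∈ I, f g) - ∑ h ∈ F, f h)‖ := by ring_nf
      _ ≤ _ := norm_add_le _ _
  have hmul := mul_le_mul_of_nonneg_left hFI hC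
  linarith

theorem stmt6 {H : Type*} [NormedAddCommGroup H] [InnerProductSpace ℂ H]
    [CompleteSpace H] [TopologicalSpace.SeparableSpace H]
    {S : Type*} [Monoid S] [DecidableEq S]
    (T : S → H →ₗᵢ[ℂ] H)
    (hmul : ∀ s t : S, T (s * t) = (T s).comp (T t))
    (hone : T 1 = (LinearIsometry.id : H →ₗᵢ[ℂ] H))
    (F : ℕ → Finset S) (hne : ∀ n, (F n).Nonempty)
    (hFol : ∀ s : S,
      Tendsto (fun n : ℕ =>
          ((((F n).image (fun h => s * h)) ∆ (F n)).card : ℝ) / ((F n).card : ℝ))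
        atTop (nhds 0)) :
    ∀ ξ η : H,
      Tendsto (fun n : ℕ => ((F n).card : ℂ)⁻¹ * ∑ h ∈ F n, ⟪(T h) ξ, η⟫_ℂ)
        atTop (nhds ⟪((fixedProjection T ξ : H)), η⟫_ℂ) := by
  classical
  intro ξ η₀
  haveI : CompleteSpace (fixedSubmodule T) := (isClosed_fixedSubmodule T).completeSpace_coe
  set M : Submodule ℂ H := fixedSubmodule T with hMdef
  set p : H := ((fixedProjection T ξ : H)) with hp
  have hpM : p ∈ M := SetLike.coe_mem (fixedProjection T ξ)
  have hTp : ∀ s, T s p = p := fun s => hpM s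
  have hproj : ∀ w ∈ M, ⟪ξ - p, w⟫_ℂ = 0 := fun w hw =>
    Submodule.starProjection_inner_eq_zero (K := M) ξ w hw
  set B : S → H →L[ℂ] H := fun s => (T s).toContinuousLinearMap with hB
  have hBapp : ∀ s x, B s x = T s x := fun s x => rfl
  -- the averages as vectors
  set A : ℕ → H := fun n => ((F n).card : ℂ)⁻¹ • ∑ h ∈ F n, T h ξ with hA
  have hcardpos : ∀ n, (0:ℝ) < ((F n).card : ℝ) := fun n => by
    exact_mod_cast (hne n).card_pos
  have hΦ : ∀ n (η : H),
      ⟪A n, η⟫_ℂ = ((F n).card : ℂ)⁻¹ * ∑ h ∈ F n, ⟪(T h) ξ, η⟫_ℂ := by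
    intro n η
    rw [hA]
    simp only [inner_smul_left, sum_inner, map_inv₀, Complex.conj_natCast]
  have hAnorm : ∀ n, ‖A n‖ ≤ ‖ξ‖ := by
    intro n
    rw [hA]
    simp only
    rw [norm_smul]
    have h1 : ‖∑ h ∈ F n, T h ξ‖ ≤ ((F n).card : ℝ) * ‖ξ‖ := by
      calc ‖∑ h ∈ F n, T h ξ‖ ≤ ∑ h ∈ F n, ‖T h ξ‖ := norm_sum_le _ _
        _ = ∑ _h ∈ F n, ‖ξ‖ := by simp [LinearIsometry.norm_map]
        _ = ((F n).card : ℝ) * ‖ξ‖ := by rw [Finset.sum_const, nsmul_eq_mul]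
    have h2 : ‖(((F n).card : ℂ)⁻¹)‖ = ((F n).card : ℝ)⁻¹ := by
      rw [norm_inv, Complex.norm_natCast]
    rw [h2]
    calc ((F n).card : ℝ)⁻¹ * ‖∑ h ∈ F n, T h ξ‖
        ≤ ((F n).card : ℝ)⁻¹ * (((F n).card : ℝ) * ‖ξ‖) := by
          apply mul_le_mul_of_nonneg_left h1 (inv_nonneg.mpr (le_of_lt (hcardpos n)))
      _ = ‖ξ‖ := by field_simp
  -- key Følner estimate
  have hkey : ∀ (s : S) (η : H),
      Tendsto (fun n => ⟪A n, ContinuousLinearMap.adjoint (B s) η⟫_ℂ - ⟪A n, η⟫_ℂ)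
        atTop (nhds 0) := by
    intro s η
    have hbound : ∀ n, ‖⟪A n, ContinuousLinearMap.adjoint (B s) η⟫_ℂ - ⟪A n, η⟫_ℂ‖
        ≤ 2 * (‖ξ‖ * ‖η‖) *
          (((((F n).image (fun h => s * h)) ∆ (F n)).card : ℝ) / ((F n).card : ℝ)) := by
      intro n
      have e1 : ⟪A n, ContinuousLinearMap.adjoint (B s) η⟫_ℂ
          = ((F n).card : ℂ)⁻¹ * ∑ h ∈ F n, ⟪(T (s * h)) ξ, η⟫_ℂ := by
        rw [ContinuousLinearMap.adjoint_inner_right, hA]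
        simp only [map_smul, map_sum]
        simp only [inner_smul_left, sum_inner, map_inv₀, Complex.conj_natCast]
        have heq : ∀ h, (B s) ((T h) ξ) = (T (s * h)) ξ := by
          intro h
          rw [hBapp, hmul s h]
          rfl
        rw [Finset.sum_congr rfl fun h _ => by rw [heq h]]
      rw [e1, hΦ n η, ← mul_sub, norm_mul]
      have e2 : ‖(((F n).card : ℂ)⁻¹)‖ = (((F n).card : ℝ))⁻¹ := by
        rw [show (((F n).card : ℂ)⁻¹) = (((((F n).card : ℝ))⁻¹ : ℝ) : ℂ) by push_cast; ring]
        rw [Complex.norm_real, Real.norm_eq_abs,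
          abs_of_nonneg (inv_nonneg.mpr (le_of_lt (hcardpos n)))]
      rw [e2]
      have e3 : ‖(∑ h ∈ F n, ⟪(T (s * h)) ξ, η⟫_ℂ) - ∑ h ∈ F n, ⟪(T h) ξ, η⟫_ℂ‖
          ≤ 2 * (‖ξ‖ * ‖η‖) * ((((F n).image (fun h => s * h)) ∆ (F n)).card : ℝ) := by
        have := sum_shift_bound (F n) (fun h => s * h) (fun h => ⟪(T h) ξ, η⟫_ℂ)
          (mul_nonneg (norm_nonneg ξ) (norm_nonneg η)) (fun a => by
            calc ‖⟪(T a) ξ, η⟫_ℂ‖ ≤ ‖(T a) ξ‖ * ‖η‖ := norm_inner_le_norm _ _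
              _ = ‖ξ‖ * ‖η‖ := by rw [LinearIsometry.norm_map])
        exact this
      calc (((F n).card : ℝ))⁻¹ * ‖(∑ h ∈ F n, ⟪(T (s * h)) ξ, η⟫_ℂ) - ∑ h ∈ F n, ⟪(T h) ξ, η⟫_ℂ‖
          ≤ (((F n).card : ℝ))⁻¹ *
            (2 * (‖ξ‖ * ‖η‖) * ((((F n).image (fun h => s * h)) ∆ (F n)).card : ℝ)) := by
            exact mul_le_mul_of_nonneg_left e3 (inv_nonneg.mpr (le_of_lt (hcardpos n)))
        _ = 2 * (‖ξ‖ * ‖η‖) *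
            (((((F n).image (fun h => s * h)) ∆ (F n)).card : ℝ) / ((F n).card : ℝ)) := by
            field_simp
    have hlim : Tendsto (fun n => 2 * (‖ξ‖ * ‖η‖) *
        (((((F n).image (fun h => s * h)) ∆ (F n)).card : ℝ) / ((F n).card : ℝ)))
        atTop (nhds 0) := by
      have := (hFol s).const_mul (2 * (‖ξ‖ * ‖η‖))
      simpa using this
    exact squeeze_zero_norm hbound hlim
  -- the submodule of good vectors
  set V : Submodule ℂ H :=
    { carrier := {η | Tendsto (fun n => ⟪A n, η⟫_ℂ) atTop (nhds ⟪p, η⟫_ℂ)}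
      add_mem' := by
        intro a b ha hb
        simp only [Set.mem_setOf_eq, inner_add_right] at *
        exact ha.add hb
      zero_mem' := by
        simp only [Set.mem_setOf_eq, inner_zero_right]
        exact tendsto_const_nhds
      smul_mem' := by
        intro c a ha
        simp only [Set.mem_setOf_eq, inner_smul_right] at *
        exact ha.const_mul c } with hV
  have hVmem : ∀ η : H, η ∈ V ↔ Tendsto (fun n => ⟪A n, η⟫_ℂ) atTop (nhds ⟪p, η⟫_ℂ) :=
    fun η => Iff.rfl
  -- V is closed
  have hVclosed : IsClosed (V : Set H) := by
    rw [← isSeqClosed_iff_isClosed]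
    intro u η hu hun
    rw [SetLike.mem_coe, hVmem]
    rw [Metric.tendsto_atTop]
    intro ε hε
    set K := ‖ξ‖ + ‖p‖ with hK
    have hKpos : 0 < K + 1 := by positivity
    have hδ : 0 < ε / (3 * (K + 1)) := by positivity
    obtain ⟨k, hk⟩ := (Metric.tendsto_atTop.mp hun) _ hδ
    have hk' : ‖u k - η‖ < ε / (3 * (K + 1)) := by
      have := hk k le_rfl
      rwa [dist_eq_norm] at this
    obtain ⟨N, hN⟩ := (Metric.tendsto_atTop.mp ((hVmem (u k)).mp (hu k))) (ε/3) (by positivity)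
    refine ⟨N, fun n hn => ?_⟩
    have expand : ⟪A n, η⟫_ℂ - ⟪p, η⟫_ℂ
        = (⟪A n, u k⟫_ℂ - ⟪p, u k⟫_ℂ) + ⟪A n - p, η - u k⟫_ℂ := by
      simp only [inner_sub_left, inner_sub_right]
      ring
    rw [dist_eq_norm, expand]
    have t1 : ‖⟪A n, u k⟫_ℂ - ⟪p, u k⟫_ℂ‖ < ε/3 := by
      have := hN n hn
      rwa [dist_eq_norm] at this
    have t2 : ‖⟪A n - p, η - u k⟫_ℂ‖ ≤ K * (ε / (3 * (K + 1))) := by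
      calc ‖⟪A n - p, η - u k⟫_ℂ‖ ≤ ‖A n - p‖ * ‖η - u k‖ := norm_inner_le_norm _ _
        _ ≤ K * ‖η - u k‖ := by
            apply mul_le_mul_of_nonneg_right _ (norm_nonneg _)
            calc ‖A n - p‖ ≤ ‖A n‖ + ‖p‖ := norm_sub_le _ _
              _ ≤ K := by rw [hK]; exact add_le_add_left (hAnorm n) _
        _ ≤ K * (ε / (3 * (K + 1))) := by
            apply mul_le_mul_of_nonneg_left _ (by positivity)
            rw [← norm_neg]
            simpa using le_of_lt hk'
    have t3 : K * (ε / (3 * (K + 1))) ≤ ε / 3 := by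
      calc K * (ε / (3 * (K + 1))) ≤ (K + 1) * (ε / (3 * (K + 1))) :=
            mul_le_mul_of_nonneg_right (by linarith) (le_of_lt hδ)
        _ = ε / 3 := by
            field_simp
    calc ‖(⟪A n, u k⟫_ℂ - ⟪p, u k⟫_ℂ) + ⟪A n - p, η - u k⟫_ℂ‖
        ≤ ‖⟪A n, u k⟫_ℂ - ⟪p, u k⟫_ℂ‖ + ‖⟪A n - p, η - u k⟫_ℂ‖ := norm_add_le _ _
      _ < ε/3 + ε/3 := by
          apply add_lt_add_of_lt_of_le t1 (le_trans t2 t3)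
      _ < ε := by linarith
  -- M ≤ V
  have hMV : M ≤ V := by
    intro x hx
    rw [hVmem]
    have hpx : ⟪p, x⟫_ℂ = ⟪ξ, x⟫_ℂ := by
      have := hproj x hx
      rw [inner_sub_left] at this
      linear_combination -this
    have hconst : ∀ n, ⟪A n, x⟫_ℂ = ⟪p, x⟫_ℂ := by
      intro n
      rw [hΦ n x, hpx]
      have : ∀ h : S, ⟪(T h) ξ, x⟫_ℂ = ⟪ξ, x⟫_ℂ := by
        intro h
        conv_lhs => rw [show x = T h x from (hx h).symm]
        exact (T h).inner_map_map ξ x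
      rw [Finset.sum_congr rfl fun h _ => this h, Finset.sum_const, nsmul_eq_mul, ← mul_assoc,
        inv_mul_cancel₀ (show ((F n).card : ℂ) ≠ 0 by exact_mod_cast (hne n).card_pos.ne'),
        one_mul]
    rw [show (fun n => ⟪A n, x⟫_ℂ) = fun _ => ⟪p, x⟫_ℂ from funext hconst]
    exact tendsto_const_nhds
  -- generators ≤ V
  have hgen : ∀ (s : S) (ζ : H), ContinuousLinearMap.adjoint (B s) ζ - ζ ∈ V := by
    intro s ζ
    rw [hVmem]
    have h0 : ⟪p, ContinuousLinearMap.adjoint (B s) ζ - ζ⟫_ℂ = 0 := by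
      rw [inner_sub_right, ContinuousLinearMap.adjoint_inner_right, hBapp, hTp s, sub_self]
    rw [h0]
    have : (fun n => ⟪A n, ContinuousLinearMap.adjoint (B s) ζ - ζ⟫_ℂ)
        = fun n => ⟪A n, ContinuousLinearMap.adjoint (B s) ζ⟫_ℂ - ⟪A n, ζ⟫_ℂ := by
      funext n; rw [inner_sub_right]
    rw [this]
    exact hkey s ζ
  -- the dense submodule
  set W : Submodule ℂ H :=
    M ⊔ Submodule.span ℂ {x | ∃ (s : S) (ζ : H), x = ContinuousLinearMap.adjoint (B s) ζ - ζ}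
    with hW
  have hWV : W ≤ V := by
    apply sup_le hMV
    rw [Submodule.span_le]
    rintro x ⟨s, ζ, rfl⟩
    exact hgen s ζ
  have hWorth : Wᗮ = ⊥ := by
    rw [Submodule.eq_bot_iff]
    intro η hη
    have hη1 : ∀ w ∈ W, ⟪w, η⟫_ℂ = 0 := (Submodule.mem_orthogonal W η).mp hη
    have hfix : η ∈ M := by
      intro s
      have hall : ∀ ζ : H, ⟪ζ, (B s) η⟫_ℂ = ⟪ζ, η⟫_ℂ := by
        intro ζ
        have hw : ContinuousLinearMap.adjoint (B s) ζ - ζ ∈ W :=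
          Submodule.mem_sup_right (Submodule.subset_span ⟨s, ζ, rfl⟩)
        have h1 := hη1 _ hw
        rw [inner_sub_left, ContinuousLinearMap.adjoint_inner_left, sub_eq_zero] at h1
        exact h1
      have : (B s) η = η := ext_inner_left ℂ hall
      rw [← hBapp]
      exact this
    have h2 : ⟪η, η⟫_ℂ = 0 := hη1 η (Submodule.mem_sup_left hfix)
    exact inner_self_eq_zero.mp h2
  have hdense : W.topologicalClosure = ⊤ := Submodule.topologicalClosure_eq_top_iff.mpr hWorth
  have htop : (⊤ : Submodule ℂ H) ≤ V := by
    rw [← hdense]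
    exact Submodule.topologicalClosure_minimal W hWV hVclosed
  have hfin : Tendsto (fun n => ⟪A n, η₀⟫_ℂ) atTop (nhds ⟪p, η₀⟫_ℂ) :=
    (hVmem η₀).mp (htop Submodule.mem_top)
  rw [show (fun n : ℕ => ((F n).card : ℂ)⁻¹ * ∑ h ∈ F n, ⟪(T h) ξ, η₀⟫_ℂ)
      = fun n => ⟪A n, η₀⟫_ℂ from funext fun n => (hΦ n η₀).symm]
  exact hfin
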